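/- Let H be a real Hilbert space, K a complete subspace of H, Π_K : H → K the orthogonal projection onto K, γ ∈ [0,1), and F : H → H a map satisfying ‖F x − F y‖ ≤ γ · ‖x − y‖ for all x, y ∈ H. Suppose Q* ∈ H satisfies F Q* = Q* and q* ∈ K satisfies Π_K(F q*) = q*. Then ‖q* − Q*‖ ≤ (1 − γ²)^{−1/2} · ‖Π_K Q* − Q*‖. -/

import Mathlib

/-- Approximation-error bound for the fixed point of the projected contraction:
`‖q* − Q*‖ ≤ (1 − γ²)^{−1/2} · ‖Π_K Q* − Q*‖`. -/
theorem projected_fixedPoint_error_bound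
    {H : Type*} [NormedAddCommGroup H] [InnerProductSpace ℝ H]
    (K : Submodule ℝ H) [CompleteSpace K]
    (γ : ℝ) (hγ0 : 0 ≤ γ) (hγ1 : γ < 1)
    (F : H → H) (hF : ∀ x y : H, ‖F x - F y‖ ≤ γ * ‖x - y‖)
    (Qstar : H) (hQstar : F Qstar = Qstar)
    (qstar : K) (hqstar : K.orthogonalProjection (F qstar) = qstar) :
    ‖(qstar : H) - Qstar‖ ≤
      (Real.sqrt (1 - γ ^ 2))⁻¹ * ‖(K.orthogonalProjection Qstar : H) - Qstar‖ := by
  set p : H := (K.orthogonalProjection Qstar : H) with hp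
  -- orthogonality: (qstar - p) ∈ K, (p - Qstar) ⊥ K
  have hmem : ((qstar : H) - p) ∈ K := K.sub_mem qstar.2 (K.orthogonalProjection Qstar).2
  have horth : Qstar - p ∈ Kᗮ := K.sub_starProjection_mem_orthogonal Qstar
  have hinner : (inner ℝ ((qstar : H) - p) (p - Qstar) : ℝ) = 0 := by
    have := horth ((qstar : H) - p) hmem
    have h2 : (inner ℝ ((qstar : H) - p) (Qstar - p) : ℝ) = 0 := by
      exact this
    have : (inner ℝ ((qstar : H) - p) (-(Qstar - p)) : ℝ) = 0 := by
      rw [inner_neg_right, h2, neg_zero]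
    simpa [neg_sub] using this
  -- Pythagoras
  have hpyth : ‖(qstar : H) - Qstar‖ ^ 2 = ‖(qstar : H) - p‖ ^ 2 + ‖p - Qstar‖ ^ 2 := by
    have := norm_add_sq_real ((qstar : H) - p) (p - Qstar)
    rw [hinner] at this
    simpa [sub_add_sub_cancel, mul_comm] using this
  -- contraction step: ‖qstar - p‖ ≤ γ ‖qstar - Qstar‖
  have hcontr : ‖(qstar : H) - p‖ ≤ γ * ‖(qstar : H) - Qstar‖ := by
    have hq : (qstar : H) = (K.orthogonalProjection (F qstar) : H) := by
      rw [hqstar]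
    have hQ : p = (K.orthogonalProjection (F Qstar) : H) := by rw [hQstar]
    calc ‖(qstar : H) - p‖
        = ‖((K.orthogonalProjection (F qstar) : H)) - (K.orthogonalProjection (F Qstar) : H)‖ := by
          rw [← hq, ← hQ]
      _ = ‖((K.orthogonalProjection (F qstar - F Qstar) : H))‖ := by
          rw [map_sub]; rfl
      _ ≤ ‖F (qstar : H) - F Qstar‖ := by
          simpa using (K.orthogonalProjection).le_of_opNorm_le
            (Submodule.orthogonalProjectionOnto_norm_le K) (F (qstar : H) - F Qstar)
      _ ≤ γ * ‖(qstar : H) - Qstar‖ := hF _ _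
  -- combine
  have hγ2 : 0 < 1 - γ ^ 2 := by nlinarith
  have key : (1 - γ ^ 2) * ‖(qstar : H) - Qstar‖ ^ 2 ≤ ‖p - Qstar‖ ^ 2 := by
    nlinarith [norm_nonneg ((qstar : H) - p), norm_nonneg ((qstar : H) - Qstar), hcontr,
      sq_nonneg (‖(qstar : H) - p‖)]
  have hsqrt : 0 < Real.sqrt (1 - γ ^ 2) := Real.sqrt_pos.mpr hγ2
  rw [inv_mul_eq_div, le_div_iff₀ hsqrt]
  have h1 : (‖(qstar : H) - Qstar‖ * Real.sqrt (1 - γ ^ 2)) ^ 2 ≤ ‖p - Qstar‖ ^ 2 := by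
    rw [mul_pow, Real.sq_sqrt hγ2.le]
    nlinarith [key]
  have h2 := Real.sqrt_le_sqrt h1
  rwa [Real.sqrt_sq (by positivity), Real.sqrt_sq (norm_nonneg _)] at h2
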